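/- Canonical-partition form of the recursion: Let x ∈ X, σ ∈ S^G_{<∞} with range c, and let α ≥ 1 be a countable ordinal. Let 𝓑_α = {B_α(y,δ) : y ∈ X, δ ∈ S^G_{<∞}}. Then B_{α+1}(x,σ) = ⋂{V^G_c·B : B ∈ 𝓑_α, V^G_σ·x ∩ B ≠ ∅} ∩ ⋂{X ∖ V^G_c·B : B ∈ 𝓑_α, V^G_σ·x ∩ B = ∅}. Moreover, with 𝓑_{<α} = {B_γ(y,δ) : y ∈ X, δ ∈ S^G_{<∞}, 1 ≤ γ < α} ∪ {A_l : l ∈ ℕ}, one has B_α(x,σ) = ⋂{V^G_c·B : B ∈ 𝓑_{<α}, V^G_σ·x ∩ B ≠ ∅} ∩ ⋂{X ∖ V^G_c·B : B ∈ 𝓑_{<α}, V^G_σ·x ∩ B = ∅}. -/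

import Mathlib

open Set Pointwise

noncomputable section

/-- `S_∞`, the group of all permutations of `ℕ`. -/
abbrev Sinf : Type := Equiv.Perm ℕ

/-- The topology of pointwise convergence on `S_∞`. -/
instance SinfTopology : TopologicalSpace Sinf :=
  TopologicalSpace.induced (fun g : Sinf => (g : ℕ → ℕ)) Pi.topologicalSpace

/-- The graph of the restriction of a permutation `g` to a finite set `d`. -/
def restr (g : Sinf) (d : Finset ℕ) : Set (ℕ × ℕ) := {p | p.1 ∈ d ∧ g p.1 = p.2}

/-- The domain of a partial map coded by its graph. -/
def pdom (σ : Set (ℕ × ℕ)) : Set ℕ := Prod.fst '' σ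

/-- The range of a partial map coded by its graph. -/
def prng (σ : Set (ℕ × ℕ)) : Set ℕ := Prod.snd '' σ

/-- `S^G_{<∞}`: graphs of restrictions of elements of `G` to finite subsets of `ℕ`. -/
def SGfin (G : Subgroup Sinf) : Set (Set (ℕ × ℕ)) :=
  {σ | ∃ g ∈ G, ∃ d : Finset ℕ, σ = restr g d}

/-- `V^G_σ`: the elements of `G` extending the partial bijection `σ`. -/
def Vb (G : Subgroup Sinf) (σ : Set (ℕ × ℕ)) : Set G :=
  {g : G | ∀ p ∈ σ, (g : Sinf) p.1 = p.2}

/-- `V^G_c`: the pointwise stabilizer of `c ⊆ ℕ` in `G`. -/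
def Vc (G : Subgroup Sinf) (c : Set ℕ) : Set G :=
  {g : G | ∀ k ∈ c, (g : Sinf) k = k}

/-- The identity partial bijection on `c`. -/
def idb (c : Set ℕ) : Set (ℕ × ℕ) := {p | p.1 ∈ c ∧ p.2 = p.1}

/-- The composition `σ ∘ f`, restricted to `f⁻¹[dom σ]`. -/
def compR (σ : Set (ℕ × ℕ)) (f : Sinf) : Set (ℕ × ℕ) := {p | (f p.1, p.2) ∈ σ}

/-- The composition `f ∘ σ`. -/
def compL (f : Sinf) (σ : Set (ℕ × ℕ)) : Set (ℕ × ℕ) := {p | (p.1, f⁻¹ p.2) ∈ σ}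

/-- The Borel classes `Σ⁰_α(X)`: `Σ⁰_1(X)` consists of the open sets, and for `α > 1`,
`Σ⁰_α(X)` consists of countable unions of sets whose complements lie in
`⋃_{1 ≤ β < α} Σ⁰_β(X)` (i.e. of sets from `⋃_{1 ≤ β < α} Π⁰_β(X)`). -/
def SigmaB (X : Type*) [TopologicalSpace X] (α : Ordinal.{0}) : Set (Set X) :=
  if α ≤ 1 then {s | IsOpen s}
  else {s | ∃ f : ℕ → Set X,
      (∀ n, ∃ β : {γ : Ordinal.{0} // γ < α}, 1 ≤ β.1 ∧ (f n)ᶜ ∈ SigmaB X β.1) ∧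
      s = ⋃ n, f n}
termination_by α
decreasing_by exact β.2

/-- The Borel classes `Π⁰_α(X)`: complements of sets in `Σ⁰_α(X)`. -/
def PiB (X : Type*) [TopologicalSpace X] (α : Ordinal.{0}) : Set (Set X) :=
  {s | sᶜ ∈ SigmaB X α}

section Action

variable (G : Subgroup Sinf) {X : Type*} [TopologicalSpace X] [MulAction G X]

/-- The image `S • x` of a point under a set of group elements. -/
def setOrb (S : Set G) (x : X) : Set X := (fun g : G => g • x) '' S

/-- The image `S • B` of a set under a set of group elements. -/
def setSmul (S : Set G) (B : Set X) : Set X := ⋃ g ∈ S, g • B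

/-- The `1`-sets `B₁(x, σ)`. -/
def BsetOne (A : ℕ → Set X) (σ : Set (ℕ × ℕ)) (x : X) : Set X :=
  (⋂ l, ⋂ (_ : (setOrb G (Vb G σ) x ∩ A l).Nonempty), setSmul G (Vc G (prng σ)) (A l)) ∩
    (⋂ l, ⋂ (_ : setOrb G (Vb G σ) x ∩ A l = ∅), (setSmul G (Vc G (prng σ)) (A l))ᶜ)

/-- The successor step of the recursion defining the `α`-sets. -/
def BsetSucc (prev : Set (ℕ × ℕ) → X → Set X) (σ : Set (ℕ × ℕ)) (x : X) : Set X :=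
  (⋂ b : Finset ℕ, ⋂ (_ : pdom σ ⊆ ↑b),
      ⋃ σ' ∈ SGfin G, ⋃ (_ : σ ⊆ σ') (_ : pdom σ' = ↑b), prev σ' x) ∩
    (⋂ a : Finset ℕ, ⋂ (_ : prng σ ⊆ ↑a),
      ⋃ σ' ∈ SGfin G, ⋃ (_ : σ ⊆ σ') (_ : prng σ' = ↑a), prev σ' x)

/-- The `α`-sets `B_α(x, σ)`, for `α ≥ 1` (the value at `α = 0` is junk). -/
def Bset (A : ℕ → Set X) (α : Ordinal.{0}) : Set (ℕ × ℕ) → X → Set X :=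
  @Ordinal.limitRecOn (fun _ => Set (ℕ × ℕ) → X → Set X) α
    (fun _ _ => univ)
    (fun o ih => if o = 0 then BsetOne G A else BsetSucc G ih)
    (fun o _ ih σ x => ⋂ β : Ordinal.{0}, ⋂ (hβ : β < o), ⋂ (_ : 1 ≤ β), ih β hβ σ x)

/-- The family `𝓑^x_{<α}` consisting of the basic open sets together with all
`β`-sets of `x` for `1 ≤ β < α`. -/
def BltFam (A : ℕ → Set X) (x : X) (α : Ordinal.{0}) : Set (Set X) :=
  {B | (∃ l, B = A l) ∨
    ∃ β : Ordinal.{0}, 1 ≤ β ∧ β < α ∧ ∃ σ ∈ SGfin G, B = Bset G A β σ x}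

/-- `γ^G_*(x)`: the least countable ordinal `γ` such that for all `σ, δ ∈ S^G_{<∞}`
with equal ranges, if `B_α(x,σ) ≠ B_α(x,δ)` for some countable ordinal `α ≥ 1`,
then already `B_γ(x,σ) ≠ B_γ(x,δ)`. -/
def gammaStar (A : ℕ → Set X) (x : X) : Ordinal :=
  sInf {γ : Ordinal.{0} | γ.card ≤ Cardinal.aleph0 ∧
    ∀ σ ∈ SGfin G, ∀ δ ∈ SGfin G, prng σ = prng δ →
      (∃ α : Ordinal.{0}, 1 ≤ α ∧ α.card ≤ Cardinal.aleph0 ∧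
        Bset G A α σ x ≠ Bset G A α δ x) →
      Bset G A γ σ x ≠ Bset G A γ δ x}

end Action

/-- The topology on a subset `S ⊆ X` generated by the traces on `S` of the members
of the family `F`. -/
def traceTop {X : Type*} (S : Set X) (F : Set (Set X)) : TopologicalSpace S :=
  TopologicalSpace.generateFrom {u : Set S | ∃ B ∈ F, u = Subtype.val ⁻¹' B}

/-- The space of closed subsets of `Y`. -/
def EffrosSpace (Y : Type*) [TopologicalSpace Y] := {K : Set Y // IsClosed K}

/-- The Effros Borel structure on the space of closed subsets of `Y`. -/
def effrosSigma (Y : Type*) [TopologicalSpace Y] : MeasurableSpace (EffrosSpace Y) :=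
  MeasurableSpace.generateFrom
    {S | ∃ U : Set Y, IsOpen U ∧ S = {K : EffrosSpace Y | (K.1 ∩ U).Nonempty}}

theorem Equiv.Perm.apply_inv_self (f : Equiv.Perm ℕ) (x : ℕ) : f (f⁻¹ x) = x :=
  Equiv.apply_symm_apply f x
theorem Equiv.Perm.inv_apply_self (f : Equiv.Perm ℕ) (x : ℕ) : f⁻¹ (f x) = x :=
  Equiv.symm_apply_apply f x

section AuxHC
variable (G : Subgroup Sinf)

lemma coeFn_mul' (g h : G) (k : ℕ) : ((g * h : G) : Sinf) k = (g : Sinf) ((h : Sinf) k) := rfl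
lemma coeFn_inv' (g : G) : ((g⁻¹ : G) : Sinf) = ((g : G) : Sinf)⁻¹ := rfl

lemma Vc_one (c : Set ℕ) : (1 : G) ∈ Vc G c := fun _ _ => rfl

lemma Vc_mul {c : Set ℕ} {g h : G} (hg : g ∈ Vc G c) (hh : h ∈ Vc G c) : g * h ∈ Vc G c := by
  intro k hk
  rw [coeFn_mul', hh k hk]
  exact hg k hk

lemma Vc_inv {c : Set ℕ} {g : G} (hg : g ∈ Vc G c) : g⁻¹ ∈ Vc G c := by
  intro k hk
  rw [coeFn_inv', Equiv.Perm.inv_eq_iff_eq]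
  exact (hg k hk).symm

lemma Vc_mono {c c' : Set ℕ} (h : c ⊆ c') : Vc G c' ⊆ Vc G c := fun g hg k hk => hg k (h hk)

lemma Vb_mono {σ σ' : Set (ℕ × ℕ)} (h : σ ⊆ σ') : Vb G σ' ⊆ Vb G σ := fun g hg p hp => hg p (h hp)

lemma mem_prng {σ : Set (ℕ × ℕ)} {p : ℕ × ℕ} (hp : p ∈ σ) : p.2 ∈ prng σ := ⟨p, hp, rfl⟩
lemma mem_pdom {σ : Set (ℕ × ℕ)} {p : ℕ × ℕ} (hp : p ∈ σ) : p.1 ∈ pdom σ := ⟨p, hp, rfl⟩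

lemma Vc_mul_Vb {σ : Set (ℕ × ℕ)} {u g : G} (hu : u ∈ Vc G (prng σ)) (hg : g ∈ Vb G σ) :
    u * g ∈ Vb G σ := by
  intro p hp
  rw [coeFn_mul', hg p hp]
  exact hu p.2 (mem_prng hp)

lemma Vb_div_Vc {σ : Set (ℕ × ℕ)} {g h : G} (hg : g ∈ Vb G σ) (hh : h ∈ Vb G σ) :
    g * h⁻¹ ∈ Vc G (prng σ) := by
  rintro m ⟨p, hp, rfl⟩
  rw [coeFn_mul', coeFn_inv']
  have h1 : ((h : G) : Sinf)⁻¹ p.2 = p.1 := by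
    rw [Equiv.Perm.inv_eq_iff_eq]; exact (hh p hp).symm
  rw [h1]; exact hg p hp

lemma mem_restr {g : Sinf} {d : Finset ℕ} {p : ℕ × ℕ} :
    p ∈ restr g d ↔ p.1 ∈ d ∧ g p.1 = p.2 := Iff.rfl

lemma pdom_restr (g : Sinf) (d : Finset ℕ) : pdom (restr g d) = ↑d := by
  ext k; constructor
  · rintro ⟨p, ⟨hd, _⟩, rfl⟩; exact hd
  · intro hk; exact ⟨(k, g k), ⟨hk, rfl⟩, rfl⟩

lemma prng_restr (g : Sinf) (d : Finset ℕ) : prng (restr g d) = ↑(d.image g) := by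
  ext m; constructor
  · rintro ⟨p, ⟨hd, hg⟩, rfl⟩
    exact Finset.mem_coe.mpr (Finset.mem_image.mpr ⟨p.1, hd, hg⟩)
  · intro hm
    obtain ⟨k, hk, rfl⟩ := Finset.mem_image.mp (Finset.mem_coe.mp hm)
    exact ⟨(k, g k), ⟨hk, rfl⟩, rfl⟩

lemma restr_mem_SGfin (g : G) (d : Finset ℕ) : restr (↑g) d ∈ SGfin G := ⟨↑g, g.2, d, rfl⟩

lemma mem_Vb_restr (g : G) (d : Finset ℕ) : g ∈ Vb G (restr (↑g) d) := fun _ hp => hp.2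

lemma exists_Vb {σ : Set (ℕ × ℕ)} (hσ : σ ∈ SGfin G) : ∃ g : G, g ∈ Vb G σ := by
  obtain ⟨g, hgG, d, rfl⟩ := hσ
  exact ⟨⟨g, hgG⟩, fun p hp => hp.2⟩

lemma exists_pdom_finset {σ : Set (ℕ × ℕ)} (hσ : σ ∈ SGfin G) : ∃ d : Finset ℕ, pdom σ = ↑d := by
  obtain ⟨g, _, d, rfl⟩ := hσ; exact ⟨d, pdom_restr _ _⟩

lemma exists_prng_finset {σ : Set (ℕ × ℕ)} (hσ : σ ∈ SGfin G) : ∃ e : Finset ℕ, prng σ = ↑e := by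
  obtain ⟨g, _, d, rfl⟩ := hσ; exact ⟨d.image g, prng_restr _ _⟩

lemma subset_restr {σ : Set (ℕ × ℕ)} {g : G} (hg : g ∈ Vb G σ) {b : Finset ℕ}
    (hb : pdom σ ⊆ ↑b) : σ ⊆ restr (↑g) b := fun p hp => ⟨hb (mem_pdom hp), hg p hp⟩

lemma eq_of_pdom_subset {σ σ' : Set (ℕ × ℕ)} (hσ' : σ' ∈ SGfin G) (hsub : σ ⊆ σ')
    (hd : pdom σ' ⊆ pdom σ) : σ' = σ := by
  obtain ⟨g, hgG, d, rfl⟩ := hσ'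
  refine Subset.antisymm ?_ hsub
  rintro p ⟨hpd, hpg⟩
  obtain ⟨q, hq, hq1⟩ := hd ⟨p, ⟨hpd, hpg⟩, rfl⟩
  have hq' := hsub hq
  have hpq : p = q := Prod.ext hq1.symm (by rw [← hpg, ← hq1]; exact hq'.2)
  rw [hpq]; exact hq

lemma restr_eq_of_Vb {σ : Set (ℕ × ℕ)} (hσ : σ ∈ SGfin G) {g : G} (hg : g ∈ Vb G σ)
    {d : Finset ℕ} (hd : pdom σ = ↑d) : σ = restr (↑g) d :=
  ((eq_of_pdom_subset G (restr_mem_SGfin G g d) (subset_restr G hg hd.le)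
    (by rw [pdom_restr, hd]))).symm

lemma idb_eq_restr (c : Finset ℕ) : idb ↑c = restr ((1 : G) : Sinf) c := by
  ext p
  constructor
  · rintro ⟨h1, h2⟩; exact ⟨h1, h2.symm⟩
  · rintro ⟨h1, h2⟩; exact ⟨h1, h2.symm⟩

lemma idb_mem_SGfin (c : Finset ℕ) : idb ↑c ∈ SGfin G := by
  rw [idb_eq_restr G c]; exact restr_mem_SGfin G 1 c

lemma prng_idb (c : Set ℕ) : prng (idb c) = c := by
  ext m; constructor
  · rintro ⟨p, ⟨h1, h2⟩, rfl⟩; rw [h2]; exact h1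
  · intro hm; exact ⟨(m, m), ⟨hm, rfl⟩, rfl⟩

lemma Vb_idb (c : Set ℕ) : Vb G (idb c) = Vc G c := by
  ext g; constructor
  · intro h k hk; exact h (k, k) ⟨hk, rfl⟩
  · rintro h p ⟨h1, h2⟩; rw [h2]; exact h p.1 h1

lemma compL_restr (h : G) (g : Sinf) (d : Finset ℕ) :
    compL (↑h) (restr g d) = restr (↑h * g) d := by
  ext p
  simp only [compL, restr, mem_setOf_eq, Equiv.Perm.mul_apply]
  constructor
  · rintro ⟨h1, h2⟩
    refine ⟨h1, ?_⟩
    rw [h2]; exact Equiv.Perm.apply_inv_self _ _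
  · rintro ⟨h1, h2⟩
    refine ⟨h1, ?_⟩
    rw [← h2]; exact (Equiv.Perm.inv_apply_self _ _).symm

lemma compL_mem_SGfin (h : G) {σ : Set (ℕ × ℕ)} (hσ : σ ∈ SGfin G) : compL (↑h) σ ∈ SGfin G := by
  obtain ⟨g, hgG, d, rfl⟩ := hσ
  exact ⟨↑h * g, mul_mem h.2 hgG, d, compL_restr G h g d⟩

lemma pdom_compL (f : Sinf) (σ : Set (ℕ × ℕ)) : pdom (compL f σ) = pdom σ := by
  ext k; constructor
  · rintro ⟨p, hp, rfl⟩; exact ⟨(p.1, f⁻¹ p.2), hp, rfl⟩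
  · rintro ⟨p, hp, rfl⟩
    refine ⟨(p.1, f p.2), ?_, rfl⟩
    show (p.1, f⁻¹ (f p.2)) ∈ σ
    rw [Equiv.Perm.inv_apply_self]
    exact hp

lemma prng_compL (f : Sinf) (σ : Set (ℕ × ℕ)) : prng (compL f σ) = f '' prng σ := by
  ext m; constructor
  · rintro ⟨p, hp, rfl⟩
    exact ⟨f⁻¹ p.2, ⟨(p.1, f⁻¹ p.2), hp, rfl⟩, Equiv.Perm.apply_inv_self _ _⟩
  · rintro ⟨n, ⟨p, hp, rfl⟩, rfl⟩
    refine ⟨(p.1, f p.2), ?_, rfl⟩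
    show (p.1, f⁻¹ (f p.2)) ∈ σ
    rw [Equiv.Perm.inv_apply_self]; exact hp

lemma mem_Vb_compL {h g : G} {σ : Set (ℕ × ℕ)} :
    g ∈ Vb G (compL (↑h) σ) ↔ h⁻¹ * g ∈ Vb G σ := by
  constructor
  · intro hg p hp
    have h1 : (p.1, (↑h : Sinf)⁻¹ ((↑h : Sinf) p.2)) ∈ σ := by
      rw [Equiv.Perm.inv_apply_self]; exact hp
    have := hg (p.1, (↑h : Sinf) p.2) h1
    rw [coeFn_mul', coeFn_inv', this]
    exact Equiv.Perm.inv_apply_self _ _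
  · intro hg p hp
    have h1 := hg (p.1, (↑h : Sinf)⁻¹ p.2) hp
    have h2 : (↑h : Sinf)⁻¹ ((↑g : Sinf) p.1) = (↑h : Sinf)⁻¹ p.2 := h1
    have h3 : (↑g : Sinf) p.1 = p.2 := (Equiv.injective _) h2
    exact h3

lemma subset_compL_inv {σ τ : Set (ℕ × ℕ)} (hστ : σ ⊆ τ) {h : G}
    (hh : h ∈ Vc G (prng σ)) : σ ⊆ compL (↑(h⁻¹ : G)) τ := by
  intro p hp
  show (p.1, (↑(h⁻¹ : G) : Sinf)⁻¹ p.2) ∈ τ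
  have : (↑(h⁻¹ : G) : Sinf)⁻¹ p.2 = p.2 := by
    rw [coeFn_inv', inv_inv]
    exact hh p.2 (mem_prng hp)
  rw [this]; exact hστ hp

end AuxHC
section AuxAct
variable (G : Subgroup Sinf) {X : Type*} [TopologicalSpace X] [MulAction G X]

lemma mem_setSmul_Vc {c : Set ℕ} {B : Set X} {y : X} :
    y ∈ setSmul G (Vc G c) B ↔ (setOrb G (Vc G c) y ∩ B).Nonempty := by
  constructor
  · intro h
    simp only [setSmul, mem_iUnion] at h
    obtain ⟨g, hg, hgy⟩ := h
    rw [mem_smul_set_iff_inv_smul_mem] at hgy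
    exact ⟨g⁻¹ • y, ⟨g⁻¹, Vc_inv G hg, rfl⟩, hgy⟩
  · rintro ⟨_, ⟨g, hg, rfl⟩, hB⟩
    simp only [setSmul, mem_iUnion]
    refine ⟨g⁻¹, Vc_inv G hg, ?_⟩
    rw [mem_smul_set_iff_inv_smul_mem, inv_inv]
    exact hB

lemma setOrb_Vb_eq {σ : Set (ℕ × ℕ)} {g : G} (hg : g ∈ Vb G σ) (x : X) :
    setOrb G (Vb G σ) x = setOrb G (Vc G (prng σ)) (g • x) := by
  ext z; constructor
  · rintro ⟨h, hh, rfl⟩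
    refine ⟨h * g⁻¹, Vb_div_Vc G hh hg, ?_⟩
    show (h * g⁻¹) • (g • x) = h • x
    rw [smul_smul, inv_mul_cancel_right]
  · rintro ⟨u, hu, rfl⟩
    exact ⟨u * g, Vc_mul_Vb G hu hg, (smul_smul u g x).symm⟩

def PatP (F : Set (Set X)) (S T : Set X) : Prop :=
  ∀ B ∈ F, ((S ∩ B).Nonempty ↔ (T ∩ B).Nonempty)

variable (A : ℕ → Set X)

def Fam (α : Ordinal.{0}) : Set (Set X) :=
  {B | (∃ l, B = A l) ∨
    ∃ γ : Ordinal.{0}, 1 ≤ γ ∧ γ < α ∧ ∃ y : X, ∃ δ ∈ SGfin G, B = Bset G A γ δ y}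

def BaF (α : Ordinal.{0}) : Set (Set X) :=
  {B | ∃ y : X, ∃ δ ∈ SGfin G, B = Bset G A α δ y}

def Pcl (α : Ordinal.{0}) (σ : Set (ℕ × ℕ)) (x : X) : Set X :=
  {y | PatP (Fam G A α) (setOrb G (Vc G (prng σ)) y) (setOrb G (Vb G σ) x)}

lemma mem_Pcl {α : Ordinal.{0}} {σ : Set (ℕ × ℕ)} {x y : X} :
    y ∈ Pcl G A α σ x ↔
      PatP (Fam G A α) (setOrb G (Vc G (prng σ)) y) (setOrb G (Vb G σ) x) := Iff.rfl

def MainP (α : Ordinal.{0}) : Prop := ∀ σ ∈ SGfin G, ∀ x : X, Bset G A α σ x = Pcl G A α σ x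

def Lprop (α : Ordinal.{0}) : Prop := ∀ (h : G), ∀ σ ∈ SGfin G, ∀ z : X,
  h • Bset G A α σ z = Bset G A α (compL (↑h) σ) z

lemma Fam_mono {α α' : Ordinal.{0}} (h : α ≤ α') : Fam G A α ⊆ Fam G A α' := by
  rintro B (⟨l, rfl⟩ | ⟨γ, h1, h2, z, δ, hδ, rfl⟩)
  · exact Or.inl ⟨l, rfl⟩
  · exact Or.inr ⟨γ, h1, h2.trans_le h, z, δ, hδ, rfl⟩

lemma lt_succ_self' (α : Ordinal.{0}) : α < α + 1 := by
  rw [Ordinal.add_one_eq_succ]; exact Order.lt_succ α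

lemma le_of_lt_succ' {γ β : Ordinal.{0}} (h : γ < β + 1) : γ ≤ β := by
  rwa [Ordinal.add_one_eq_succ, Order.lt_succ_iff] at h

lemma one_le_succ' (α : Ordinal.{0}) : (1 : Ordinal.{0}) ≤ α + 1 := by
  simpa using add_le_add_right (Ordinal.zero_le α) 1

lemma Bset_one : Bset G A 1 = BsetOne G A := by
  unfold Bset
  rw [show (1 : Ordinal.{0}) = Order.succ 0 from (Ordinal.succ_zero).symm,
    Ordinal.limitRecOn_succ]
  simp

lemma Bset_succ (α : Ordinal.{0}) (hα : α ≠ 0) :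
    Bset G A (α + 1) = BsetSucc G (Bset G A α) := by
  unfold Bset
  rw [Ordinal.add_one_eq_succ, Ordinal.limitRecOn_succ]
  simp [hα]

lemma Bset_limit (α : Ordinal.{0}) (hα : Order.IsSuccLimit α) (σ : Set (ℕ × ℕ)) (x : X) :
    Bset G A α σ x =
      ⋂ (β : Ordinal.{0}), ⋂ (_ : β < α), ⋂ (_ : 1 ≤ β), Bset G A β σ x := by
  unfold Bset
  rw [Ordinal.limitRecOn_limit _ _ _ _ hα]

lemma mem_BsetOne {σ : Set (ℕ × ℕ)} {x y : X} :
    y ∈ BsetOne G A σ x ↔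
      ((∀ l, (setOrb G (Vb G σ) x ∩ A l).Nonempty → y ∈ setSmul G (Vc G (prng σ)) (A l)) ∧
       (∀ l, setOrb G (Vb G σ) x ∩ A l = ∅ → y ∉ setSmul G (Vc G (prng σ)) (A l))) := by
  simp [BsetOne, mem_iInter]

lemma mem_BsetSucc {prev : Set (ℕ × ℕ) → X → Set X} {σ : Set (ℕ × ℕ)} {x y : X} :
    y ∈ BsetSucc G prev σ x ↔
      ((∀ b : Finset ℕ, pdom σ ⊆ ↑b →
          ∃ σ', σ' ∈ SGfin G ∧ σ ⊆ σ' ∧ pdom σ' = ↑b ∧ y ∈ prev σ' x) ∧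
       (∀ a : Finset ℕ, prng σ ⊆ ↑a →
          ∃ σ', σ' ∈ SGfin G ∧ σ ⊆ σ' ∧ prng σ' = ↑a ∧ y ∈ prev σ' x)) := by
  simp only [BsetSucc, mem_inter_iff, mem_iInter, mem_iUnion, exists_prop]

end AuxAct
section AuxSat
variable (G : Subgroup Sinf) {X : Type*} [TopologicalSpace X] [MulAction G X]
variable (A : ℕ → Set X)

lemma meets_open (hbasis : TopologicalSpace.IsTopologicalBasis (Set.range A)) {S T : Set X}
    (hST : ∀ l, ((S ∩ A l).Nonempty ↔ (T ∩ A l).Nonempty)) {U : Set X} (hU : IsOpen U)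
    (h : (S ∩ U).Nonempty) : (T ∩ U).Nonempty := by
  obtain ⟨s, hsS, hsU⟩ := h
  obtain ⟨t, ⟨l, rfl⟩, hsl, hlU⟩ := hbasis.exists_subset_of_mem_open hsU hU
  obtain ⟨t, htT, htl⟩ := (hST l).mp ⟨s, hsS, hsl⟩
  exact ⟨t, htT, hlU htl⟩

lemma sat [ContinuousSMul G X] (hbasis : TopologicalSpace.IsTopologicalBasis (Set.range A))
    (α : Ordinal.{0}) (hL : ∀ γ : Ordinal.{0}, 1 ≤ γ → γ < α → Lprop G A γ)
    {S T : Set X} (hST : PatP (Fam G A α) S T) (g : G) {B : Set X} (hB : B ∈ Fam G A α) :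
    ((S ∩ g • B).Nonempty ↔ (T ∩ g • B).Nonempty) := by
  rcases hB with ⟨l, rfl⟩ | ⟨γ, h1, h2, z, δ, hδ, rfl⟩
  · have hST' : ∀ l', ((S ∩ A l').Nonempty ↔ (T ∩ A l').Nonempty) :=
      fun l' => hST _ (Or.inl ⟨l', rfl⟩)
    have hU : IsOpen (g • A l) := (hbasis.isOpen ⟨l, rfl⟩).smul g
    exact ⟨meets_open A hbasis hST' hU, meets_open A hbasis (fun l' => (hST' l').symm) hU⟩
  · rw [hL γ h1 h2 g δ hδ z]
    exact hST _ (Or.inr ⟨γ, h1, h2, z, compL (↑g) δ, compL_mem_SGfin G g hδ, rfl⟩)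

lemma conj_cond {aS c' : Set ℕ} {h : G} (hsub : ∀ m ∈ c', ((h : Sinf))⁻¹ m ∈ aS) :
    ∀ v : G, v ∈ Vc G aS → h * v * h⁻¹ ∈ Vc G c' := by
  intro v hv m hm
  show (↑h : Sinf) ((↑v : Sinf) ((↑(h⁻¹ : G) : Sinf) m)) = m
  rw [coeFn_inv', hv _ (hsub m hm), Equiv.Perm.apply_inv_self]

lemma meets_coset {c' aS : Set ℕ} {h : G} (hcond : ∀ v : G, v ∈ Vc G aS → h * v * h⁻¹ ∈ Vc G c')
    (w : X) (B' : Set X) :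
    ((setOrb G (Vc G c') (h • w) ∩ B').Nonempty ↔
      ∃ u ∈ Vc G c', ((setOrb G (Vc G aS) w ∩ ((u * h)⁻¹ • B')).Nonempty)) := by
  constructor
  · rintro ⟨_, ⟨u, hu, rfl⟩, huB⟩
    refine ⟨u, hu, w, ⟨1, Vc_one G aS, one_smul _ _⟩, ?_⟩
    rw [mem_smul_set_iff_inv_smul_mem, inv_inv, ← smul_smul]
    exact huB
  · rintro ⟨u, hu, _, ⟨v, hv, rfl⟩, hvB⟩
    have hvB' : (u * h) • (v • w) ∈ B' := by
      rw [mem_smul_set_iff_inv_smul_mem, inv_inv] at hvB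
      exact hvB
    refine ⟨(u * (h * v * h⁻¹)) • (h • w), ⟨_, Vc_mul G hu (hcond v hv), rfl⟩, ?_⟩
    have he : (u * (h * v * h⁻¹)) • (h • w) = (u * h) • (v • w) := by
      rw [smul_smul, smul_smul]
      congr 1
      group
    rw [he]
    exact hvB'

lemma pat_transfer [ContinuousSMul G X]
    (hbasis : TopologicalSpace.IsTopologicalBasis (Set.range A)) (β : Ordinal.{0})
    (hL : ∀ γ : Ordinal.{0}, 1 ≤ γ → γ < β → Lprop G A γ)
    {aS c' : Set ℕ} {h : G} (hcond : ∀ v : G, v ∈ Vc G aS → h * v * h⁻¹ ∈ Vc G c')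
    {y y' : X} (hP : PatP (Fam G A β) (setOrb G (Vc G aS) y) (setOrb G (Vc G aS) y')) :
    PatP (Fam G A β) (setOrb G (Vc G c') (h • y)) (setOrb G (Vc G c') (h • y')) := by
  intro B' hB'
  rw [meets_coset G hcond y B', meets_coset G hcond y' B']
  constructor <;> rintro ⟨u, hu, hne⟩
  · exact ⟨u, hu, (sat G A hbasis β hL hP ((u * h)⁻¹) hB').mp hne⟩
  · exact ⟨u, hu, (sat G A hbasis β hL hP ((u * h)⁻¹) hB').mpr hne⟩

lemma smul_inter_nonempty (h : G) (S B : Set X) :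
    ((h • S) ∩ B).Nonempty ↔ (S ∩ h⁻¹ • B).Nonempty := by
  have e : (h • S) ∩ B = h • (S ∩ h⁻¹ • B) := by
    rw [Set.smul_set_inter, smul_inv_smul]
  rw [e, Set.smul_set_nonempty]

lemma Lall [ContinuousSMul G X] (hbasis : TopologicalSpace.IsTopologicalBasis (Set.range A)) :
    ∀ α : Ordinal.{0}, 1 ≤ α → (∀ β, 1 ≤ β → β ≤ α → MainP G A β) → Lprop G A α := by
  intro α
  induction α using Ordinal.induction with
  | h α IH =>
  intro h1 hmain h σ hσ z
  have hL : ∀ γ, 1 ≤ γ → γ < α → Lprop G A γ := fun γ hγ1 hγ2 =>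
    IH γ hγ2 hγ1 (fun β hβ1 hβ2 => hmain β hβ1 (hβ2.trans hγ2.le))
  have hm := hmain α h1 le_rfl
  rw [hm σ hσ z, hm (compL (↑h) σ) (compL_mem_SGfin G h hσ) z]
  ext w
  rw [mem_smul_set_iff_inv_smul_mem, mem_Pcl, mem_Pcl]
  have idA : setOrb G (Vc G (prng (compL (↑h) σ))) w
      = h • setOrb G (Vc G (prng σ)) (h⁻¹ • w) := by
    rw [prng_compL]
    ext z'
    constructor
    · rintro ⟨u, hu, rfl⟩
      refine ⟨(h⁻¹ * u * h) • (h⁻¹ • w), ⟨h⁻¹ * u * h, ?_, rfl⟩, ?_⟩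
      · intro k hk
        show (↑(h⁻¹ : G) : Sinf) ((↑u : Sinf) ((↑h : Sinf) k)) = k
        rw [hu _ ⟨k, hk, rfl⟩, coeFn_inv', Equiv.Perm.inv_apply_self]
      · show h • ((h⁻¹ * u * h) • (h⁻¹ • w)) = u • w
        simp only [smul_smul]
        congr 1
        group
    · rintro ⟨_, ⟨v, hv, rfl⟩, rfl⟩
      refine ⟨h * v * h⁻¹, ?_, ?_⟩
      · rintro _ ⟨k, hk, rfl⟩
        show (↑h : Sinf) ((↑v : Sinf) ((↑(h⁻¹ : G) : Sinf) ((↑h : Sinf) k))) = (↑h : Sinf) k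
        rw [coeFn_inv', Equiv.Perm.inv_apply_self, hv k hk]
      · show (h * v * h⁻¹) • w = h • (v • (h⁻¹ • w))
        simp only [smul_smul]
        congr 1
  have idB : setOrb G (Vb G (compL (↑h) σ)) z = h • setOrb G (Vb G σ) z := by
    ext z'
    constructor
    · rintro ⟨u, hu, rfl⟩
      refine ⟨(h⁻¹ * u) • z, ⟨h⁻¹ * u, mem_Vb_compL G |>.mp hu, rfl⟩, ?_⟩
      show h • ((h⁻¹ * u) • z) = u • z
      simp only [smul_smul]
      congr 1
      group
    · rintro ⟨_, ⟨v, hv, rfl⟩, rfl⟩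
      refine ⟨h * v, ?_, (smul_smul h v z).symm⟩
      exact (mem_Vb_compL G).mpr (by rwa [inv_mul_cancel_left])
  rw [idA, idB]
  constructor
  · intro hP B hB
    rw [smul_inter_nonempty, smul_inter_nonempty]
    exact sat G A hbasis α hL hP h⁻¹ hB
  · intro hP B hB
    have e1 := smul_inter_nonempty G h (setOrb G (Vc G (prng σ)) (h⁻¹ • w)) (h • B)
    have e2 := smul_inter_nonempty G h (setOrb G (Vb G σ) z) (h • B)
    rw [inv_smul_smul] at e1 e2
    rw [← e1, ← e2]
    exact sat G A hbasis α hL hP h hB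

end AuxSat
section AuxMain
variable (G : Subgroup Sinf) {X : Type*} [TopologicalSpace X] [MulAction G X]
variable (A : ℕ → Set X)

lemma main_one : MainP G A 1 := by
  intro σ hσ x
  rw [Bset_one]
  ext y
  rw [mem_BsetOne, mem_Pcl]
  constructor
  · rintro ⟨hpos, hneg⟩ B hB
    rcases hB with ⟨l, rfl⟩ | ⟨γ, h1, h2, _⟩
    · constructor
      · intro hy
        rcases eq_empty_or_nonempty (setOrb G (Vb G σ) x ∩ A l) with he | hne
        · exact absurd ((mem_setSmul_Vc G).mpr hy) (hneg l he)
        · exact hne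
      · intro hx
        exact (mem_setSmul_Vc G).mp (hpos l hx)
    · exact absurd (h1.trans_lt h2) (lt_irrefl 1)
  · intro hy
    constructor
    · intro l hx
      exact (mem_setSmul_Vc G).mpr ((hy (A l) (Or.inl ⟨l, rfl⟩)).mpr hx)
    · intro l he hyl
      have h' := (hy (A l) (Or.inl ⟨l, rfl⟩)).mp ((mem_setSmul_Vc G).mp hyl)
      rw [he] at h'
      exact Set.not_nonempty_empty h'

lemma main_limit (α : Ordinal.{0}) (hlim : Order.IsSuccLimit α)
    (IH : ∀ β, β < α → 1 ≤ β → MainP G A β) : MainP G A α := by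
  intro σ hσ x
  ext y
  rw [Bset_limit G A α hlim, mem_Pcl]
  simp only [mem_iInter]
  constructor
  · intro hy B hB
    rcases hB with ⟨l, rfl⟩ | ⟨γ, h1, h2, z, δ, hδ, rfl⟩
    · have h1' := hy 1 (Ordinal.one_lt_of_isSuccLimit hlim) le_rfl
      rw [IH 1 (Ordinal.one_lt_of_isSuccLimit hlim) le_rfl σ hσ x, mem_Pcl] at h1'
      exact h1' (A l) (Or.inl ⟨l, rfl⟩)
    · have hs1 : (1 : Ordinal.{0}) ≤ γ + 1 := one_le_succ' γ
      have hslt : γ + 1 < α := by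
        rw [Ordinal.add_one_eq_succ]; exact hlim.succ_lt h2
      have h1' := hy (γ + 1) hslt hs1
      rw [IH (γ + 1) hslt hs1 σ hσ x, mem_Pcl] at h1'
      exact h1' _ (Or.inr ⟨γ, h1, lt_succ_self' γ, z, δ, hδ, rfl⟩)
  · intro hy β hβ h1β
    rw [IH β hβ h1β σ hσ x, mem_Pcl]
    intro B hB
    exact hy B (Fam_mono G A hβ.le hB)

lemma main_succ [ContinuousSMul G X]
    (hbasis : TopologicalSpace.IsTopologicalBasis (Set.range A))
    (β : Ordinal.{0}) (hβ1 : 1 ≤ β)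
    (hmain : ∀ γ, 1 ≤ γ → γ ≤ β → MainP G A γ) : MainP G A (β + 1) := by
  have hβ0 : β ≠ 0 := by rintro rfl; exact absurd hβ1 (by norm_num)
  have hL : ∀ γ, 1 ≤ γ → γ ≤ β → Lprop G A γ := fun γ h1 h2 =>
    Lall G A hbasis γ h1 (fun γ' h1' h2' => hmain γ' h1' (h2'.trans h2))
  have hLlt : ∀ γ, 1 ≤ γ → γ < β → Lprop G A γ := fun γ h1 h2 => hL γ h1 h2.le
  have hmβ := hmain β hβ1 le_rfl
  intro σ hσ x
  rw [Bset_succ G A β hβ0]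
  obtain ⟨dF, hdF⟩ := exists_pdom_finset G hσ
  obtain ⟨cF, hcF⟩ := exists_prng_finset G hσ
  ext y
  rw [mem_BsetSucc, mem_Pcl]
  constructor
  · rintro ⟨hdom, hrng⟩
    have hyβ : y ∈ Pcl G A β σ x := by
      obtain ⟨σ', hσ'1, hσ'2, hσ'3, hσ'4⟩ := hdom dF (by rw [hdF])
      have he : σ' = σ := eq_of_pdom_subset G hσ'1 hσ'2 (by rw [hσ'3, ← hdF])
      rw [he, hmβ σ hσ x] at hσ'4
      exact hσ'4
    intro B hB
    rcases hB with ⟨l, rfl⟩ | ⟨γ, h1, h2, z, δ, hδ, rfl⟩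
    · exact hyβ (A l) (Or.inl ⟨l, rfl⟩)
    rcases lt_or_eq_of_le (le_of_lt_succ' h2) with hlt | rfl
    · exact hyβ _ (Or.inr ⟨γ, h1, hlt, z, δ, hδ, rfl⟩)
    obtain ⟨c'F, hc'F⟩ := exists_prng_finset G hδ
    constructor
    · -- meets on y side → meets on x side
      rintro ⟨_, ⟨h, hh, rfl⟩, hhB⟩
      classical
      set aF : Finset ℕ := cF ∪ c'F ∪ c'F.image ((↑(h⁻¹ : G) : Sinf)) with haF
      obtain ⟨σ'', h''1, h''2, h''3, h''4⟩ := hrng aF (by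
        rw [hcF]
        intro k hk
        simp only [haF, Finset.coe_union, Set.mem_union]
        exact Or.inl (Or.inl hk))
      obtain ⟨g'', hg''⟩ := exists_Vb G h''1
      rw [hmain γ h1 le_rfl σ'' h''1 x, mem_Pcl, setOrb_Vb_eq G hg'' x] at h''4
      have hcond : ∀ v : G, v ∈ Vc G (prng σ'') → h * v * h⁻¹ ∈ Vc G (prng δ) := by
        refine conj_cond G ?_
        intro m hm
        rw [h''3]
        rw [hc'F] at hm
        simp only [haF, Finset.coe_union, Set.mem_union]
        refine Or.inr ?_
        rw [Finset.coe_image]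
        exact ⟨m, hm, rfl⟩
      have htrans := pat_transfer G A hbasis γ hLlt hcond h''4
      rw [hmain γ h1 le_rfl δ hδ z, mem_Pcl] at hhB
      refine ⟨(h * g'') • x, ⟨h * g'', Vc_mul_Vb G hh (Vb_mono G h''2 hg''), rfl⟩, ?_⟩
      rw [hmain γ h1 le_rfl δ hδ z, mem_Pcl]
      intro B' hB'
      rw [mul_smul]
      exact ((htrans B' hB').symm).trans (hhB B' hB')
    · -- meets on x side → meets on y side
      rintro ⟨_, ⟨h', hh', rfl⟩, hB⟩
      classical
      set bF : Finset ℕ := dF ∪ c'F.image ((↑(h'⁻¹ : G) : Sinf)) with hbF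
      obtain ⟨σ', h'1, h'2, h'3, h'4⟩ := hdom bF (by
        rw [hdF]
        intro k hk
        simp only [hbF, Finset.coe_union, Set.mem_union]
        exact Or.inl hk)
      obtain ⟨g', hg'⟩ := exists_Vb G h'1
      have hrestr : σ' = restr (↑g') bF := restr_eq_of_Vb G h'1 hg' h'3
      have hprng' : prng σ' = ↑(bF.image (↑g' : Sinf)) := by rw [hrestr, prng_restr]
      have hhc : h' * g'⁻¹ ∈ Vc G (prng σ) := Vb_div_Vc G hh' (Vb_mono G h'2 hg')
      rw [hmain γ h1 le_rfl σ' h'1 x, mem_Pcl, setOrb_Vb_eq G hg' x] at h'4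
      have hcond : ∀ v : G, v ∈ Vc G (prng σ') →
          (h' * g'⁻¹) * v * (h' * g'⁻¹)⁻¹ ∈ Vc G (prng δ) := by
        refine conj_cond G ?_
        intro m hm
        rw [hprng']
        rw [hc'F] at hm
        have e : ((↑(h' * g'⁻¹ : G) : Sinf))⁻¹ m = (↑g' : Sinf) ((↑(h'⁻¹ : G) : Sinf) m) := by
          rw [← coeFn_inv', show ((h' * g'⁻¹)⁻¹ : G) = g' * h'⁻¹ by group]
          rfl
        rw [e]
        rw [Finset.coe_image]
        refine ⟨(↑(h'⁻¹ : G) : Sinf) m, ?_, rfl⟩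
        simp only [hbF, Finset.coe_union, Set.mem_union]
        refine Or.inr ?_
        rw [Finset.coe_image]
        exact ⟨m, hm, rfl⟩
      have htrans := pat_transfer G A hbasis γ hLlt hcond ((fun B' hB' => (h'4 B' hB').symm) :
        PatP (Fam G A γ) (setOrb G (Vc G (prng σ')) (g' • x)) (setOrb G (Vc G (prng σ')) y))
      rw [hmain γ h1 le_rfl δ hδ z, mem_Pcl] at hB
      refine ⟨(h' * g'⁻¹) • y, ⟨h' * g'⁻¹, hhc, rfl⟩, ?_⟩
      rw [hmain γ h1 le_rfl δ hδ z, mem_Pcl]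
      intro B' hB'
      have e2 : (h' * g'⁻¹) • (g' • x) = h' • x := by
        rw [smul_smul, inv_mul_cancel_right]
      rw [e2] at htrans
      exact ((htrans B' hB').symm).trans (hB B' hB')
  · intro hy
    refine ⟨?_, ?_⟩
    · -- domain part
      intro b hb
      obtain ⟨g₀, hg₀⟩ := exists_Vb G hσ
      have hτSG : restr (↑g₀) b ∈ SGfin G := restr_mem_SGfin G g₀ b
      have hστ : σ ⊆ restr (↑g₀) b := subset_restr G hg₀ hb
      have hg₀τ : g₀ ∈ Vb G (restr (↑g₀) b) := mem_Vb_restr G g₀ b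
      have hBF : Bset G A β (restr (↑g₀) b) x ∈ Fam G A (β + 1) :=
        Or.inr ⟨β, hβ1, lt_succ_self' β, x, _, hτSG, rfl⟩
      have hxmem : g₀ • x ∈ Bset G A β (restr (↑g₀) b) x := by
        rw [hmain β hβ1 le_rfl _ hτSG x, mem_Pcl]
        intro B' hB'
        rw [setOrb_Vb_eq G hg₀τ x]
      have hNE : (setOrb G (Vb G σ) x ∩ Bset G A β (restr (↑g₀) b) x).Nonempty :=
        ⟨g₀ • x, ⟨g₀, hg₀, rfl⟩, hxmem⟩
      obtain ⟨_, ⟨h, hh, rfl⟩, hhy⟩ := (hy _ hBF).mpr hNE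
      refine ⟨compL (↑(h⁻¹ : G)) (restr (↑g₀) b), compL_mem_SGfin G h⁻¹ hτSG,
        subset_compL_inv G hστ hh, ?_, ?_⟩
      · rw [pdom_compL, pdom_restr]
      · have hLe := hL β hβ1 le_rfl h⁻¹ (restr (↑g₀) b) hτSG x
        rw [← hLe]
        exact ⟨h • y, hhy, inv_smul_smul h y⟩
    · -- range part
      intro a ha
      have hidb : idb ↑a ∈ SGfin G := idb_mem_SGfin G a
      have hBF : Bset G A β (idb ↑a) y ∈ Fam G A (β + 1) :=
        Or.inr ⟨β, hβ1, lt_succ_self' β, y, _, hidb, rfl⟩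
      have hymem : y ∈ Bset G A β (idb ↑a) y := by
        rw [hmain β hβ1 le_rfl _ hidb y, mem_Pcl]
        intro B' hB'
        rw [Vb_idb, prng_idb]
      have hNE : (setOrb G (Vc G (prng σ)) y ∩ Bset G A β (idb ↑a) y).Nonempty :=
        ⟨y, ⟨1, Vc_one G _, one_smul _ _⟩, hymem⟩
      obtain ⟨_, ⟨g, hg, rfl⟩, hgx⟩ := (hy _ hBF).mp hNE
      classical
      set d'' : Finset ℕ := a.image ((↑(g⁻¹ : G) : Sinf)) with hd''
      have himg : d''.image ((↑g : G) : Sinf) = a := by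
        rw [hd'', Finset.image_image]
        ext k
        simp only [Finset.mem_image, Function.comp_apply]
        constructor
        · rintro ⟨m, hm, rfl⟩
          rw [coeFn_inv', Equiv.Perm.apply_inv_self]
          exact hm
        · intro hk
          refine ⟨k, hk, ?_⟩
          rw [coeFn_inv', Equiv.Perm.apply_inv_self]
      have hprng'' : prng (restr (↑g) d'') = ↑a := by rw [prng_restr, himg]
      refine ⟨restr (↑g) d'', restr_mem_SGfin G g d'', ?_, hprng'', ?_⟩
      · intro p hp
        refine ⟨?_, hg p hp⟩
        have hp2 : p.2 ∈ (a : Set ℕ) := ha (mem_prng hp)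
        rw [hd'']
        simp only [Finset.mem_coe, Finset.mem_image]
        refine ⟨p.2, hp2, ?_⟩
        rw [coeFn_inv', ← hg p hp, Equiv.Perm.inv_apply_self]
      · rw [hmain β hβ1 le_rfl _ (restr_mem_SGfin G g d'') x, mem_Pcl]
        have hgVb : g ∈ Vb G (restr (↑g) d'') := mem_Vb_restr G g d''
        rw [setOrb_Vb_eq G hgVb x, hprng'']
        rw [hmain β hβ1 le_rfl _ hidb y, mem_Pcl, prng_idb, Vb_idb] at hgx
        intro B' hB'
        exact (hgx B' hB').symm

lemma mainAll [ContinuousSMul G X]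
    (hbasis : TopologicalSpace.IsTopologicalBasis (Set.range A)) :
    ∀ α : Ordinal.{0}, 1 ≤ α → MainP G A α := by
  intro α
  induction α using Ordinal.induction with
  | h α IH =>
  intro h1
  rcases Ordinal.zero_or_succ_or_isSuccLimit α with h0 | ⟨β, rfl⟩ | hlim
  · subst h0; exact absurd h1 (by norm_num)
  · rcases eq_or_ne β 0 with rfl | hβ0
    · have : MainP G A 1 := main_one G A
      rwa [show Order.succ (0 : Ordinal.{0}) = 1 from Ordinal.succ_zero]
    · have hβ1 : (1 : Ordinal.{0}) ≤ β := Ordinal.one_le_iff_ne_zero.mpr hβ0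
      have hmainle : ∀ γ, 1 ≤ γ → γ ≤ β → MainP G A γ := fun γ hγ1 hγ2 =>
        IH γ (lt_of_le_of_lt hγ2 (by rw [← Ordinal.add_one_eq_succ]; exact lt_succ_self' β)) hγ1
      have : MainP G A (β + 1) := main_succ G A hbasis β hβ1 hmainle
      rwa [Ordinal.add_one_eq_succ] at this
  · exact main_limit G A α hlim (fun β hβ h1β => IH β hβ h1β)

end AuxMain
section AuxFinal
variable (G : Subgroup Sinf) {X : Type*} [TopologicalSpace X] [MulAction G X]
variable (A : ℕ → Set X)

lemma inter_form (F : Set (Set X)) (c : Set ℕ) (T : Set X) :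
    ((⋂ B ∈ F, ⋂ (_ : (T ∩ B).Nonempty), setSmul G (Vc G c) B) ∩
      (⋂ B ∈ F, ⋂ (_ : T ∩ B = ∅), (setSmul G (Vc G c) B)ᶜ)) =
    {y | ∀ B ∈ F, ((setOrb G (Vc G c) y ∩ B).Nonempty ↔ (T ∩ B).Nonempty)} := by
  ext y
  simp only [mem_inter_iff, mem_iInter, mem_setOf_eq, mem_compl_iff]
  constructor
  · rintro ⟨hp, hn⟩ B hB
    constructor
    · intro hy
      rcases eq_empty_or_nonempty (T ∩ B) with he | hne
      · exact absurd ((mem_setSmul_Vc G).mpr hy) (hn B hB he)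
      · exact hne
    · intro hT
      exact (mem_setSmul_Vc G).mp (hp B hB hT)
  · intro h
    constructor
    · intro B hB hT
      exact (mem_setSmul_Vc G).mpr ((h B hB).mpr hT)
    · intro B hB hT hy
      have h' := (h B hB).mp ((mem_setSmul_Vc G).mp hy)
      rw [hT] at h'
      exact Set.not_nonempty_empty h'

lemma reduce_toBa [ContinuousSMul G X]
    (hbasis : TopologicalSpace.IsTopologicalBasis (Set.range A))
    (hbasisInv : ∀ l, ∃ c : Finset ℕ, ∀ g ∈ Vc G (↑c : Set ℕ), g • A l = A l)
    (α : Ordinal.{0}) (hα : 1 ≤ α)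
    (hmain : ∀ γ, 1 ≤ γ → γ ≤ α → MainP G A γ)
    (σ : Set (ℕ × ℕ)) (x y : X) :
    (∀ B ∈ Fam G A (α + 1),
        ((setOrb G (Vc G (prng σ)) y ∩ B).Nonempty ↔ (setOrb G (Vb G σ) x ∩ B).Nonempty)) ↔
    (∀ B ∈ BaF G A α,
        ((setOrb G (Vc G (prng σ)) y ∩ B).Nonempty ↔ (setOrb G (Vb G σ) x ∩ B).Nonempty)) := by
  constructor
  · intro h B hB
    obtain ⟨z, δ, hδ, rfl⟩ := hB
    exact h _ (Or.inr ⟨α, hα, lt_succ_self' α, z, δ, hδ, rfl⟩)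
  · intro h B hB
    have key : ∀ w ∈ B, ∃ B', B' ∈ BaF G A α ∧ w ∈ B' ∧ B' ⊆ B := by
      intro w hw
      rcases hB with ⟨l, rfl⟩ | ⟨γ, h1, h2, z, δ, hδ, rfl⟩
      · obtain ⟨c'', hc''⟩ := hbasisInv l
        refine ⟨Bset G A α (idb ↑c'') w, ⟨w, _, idb_mem_SGfin G c'', rfl⟩, ?_, ?_⟩
        · rw [hmain α hα le_rfl _ (idb_mem_SGfin G c'') w, mem_Pcl]
          intro B' hB'
          rw [Vb_idb, prng_idb]
        · intro w' hw'
          rw [hmain α hα le_rfl _ (idb_mem_SGfin G c'') w, mem_Pcl] at hw'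
          have hiff := hw' (A l) (Or.inl ⟨l, rfl⟩)
          rw [prng_idb, Vb_idb] at hiff
          obtain ⟨_, ⟨u, hu, rfl⟩, huA⟩ := hiff.mpr ⟨w, ⟨1, Vc_one G _, one_smul _ _⟩, hw⟩
          have hmem : w' ∈ u⁻¹ • A l := ⟨u • w', huA, inv_smul_smul u w'⟩
          rwa [hc'' u⁻¹ (Vc_inv G hu)] at hmem
      · have hγα : γ ≤ α := le_of_lt_succ' h2
        obtain ⟨c'F, hc'F⟩ := exists_prng_finset G hδ
        refine ⟨Bset G A α (idb ↑c'F) w, ⟨w, _, idb_mem_SGfin G c'F, rfl⟩, ?_, ?_⟩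
        · rw [hmain α hα le_rfl _ (idb_mem_SGfin G c'F) w, mem_Pcl]
          intro B' hB'
          rw [Vb_idb, prng_idb]
        · intro w' hw'
          rw [hmain α hα le_rfl _ (idb_mem_SGfin G c'F) w, mem_Pcl] at hw'
          rw [hmain γ h1 hγα δ hδ z, mem_Pcl] at hw
          rw [hmain γ h1 hγα δ hδ z, mem_Pcl]
          intro B' hB'
          have hB'α : B' ∈ Fam G A α := Fam_mono G A hγα hB'
          have h1' := hw' B' hB'α
          rw [prng_idb, Vb_idb] at h1'
          have h2' := hw B' hB'
          rw [hc'F] at h2' ⊢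
          exact h1'.trans h2'
    constructor
    · rintro ⟨w, hwS, hwB⟩
      obtain ⟨B', hB'Ba, hwB', hsub⟩ := key w hwB
      obtain ⟨w', hw'T, hw'B'⟩ := (h B' hB'Ba).mp ⟨w, hwS, hwB'⟩
      exact ⟨w', hw'T, hsub hw'B'⟩
    · rintro ⟨w, hwT, hwB⟩
      obtain ⟨B', hB'Ba, hwB', hsub⟩ := key w hwB
      obtain ⟨w', hw'S, hw'B'⟩ := (h B' hB'Ba).mpr ⟨w, hwT, hwB'⟩
      exact ⟨w', hw'S, hsub hw'B'⟩

end AuxFinal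
/-- Canonical-partition form of the recursion. -/
theorem alphaSet_canonical_recursion
    (G : Subgroup Sinf) (hGclosed : IsClosed (G : Set Sinf))
    {X : Type*} [TopologicalSpace X] [PolishSpace X] [MulAction G X] [ContinuousSMul G X]
    (A : ℕ → Set X) (hbasis : TopologicalSpace.IsTopologicalBasis (Set.range A))
    (hbasisInv : ∀ l, ∃ c : Finset ℕ, ∀ g ∈ Vc G (↑c : Set ℕ), g • A l = A l)
    (x : X) (σ : Set (ℕ × ℕ)) (hσ : σ ∈ SGfin G)
    (α : Ordinal.{0}) (hα : 1 ≤ α) (hαc : α.card ≤ Cardinal.aleph0)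
    (Ba Blt : Set (Set X))
    (hBa : Ba = {B | ∃ y : X, ∃ δ ∈ SGfin G, B = Bset G A α δ y})
    (hBlt : Blt = {B | (∃ l, B = A l) ∨
        ∃ γ : Ordinal.{0}, 1 ≤ γ ∧ γ < α ∧ ∃ y : X, ∃ δ ∈ SGfin G, B = Bset G A γ δ y}) :
    (Bset G A (α + 1) σ x =
      (⋂ B ∈ Ba, ⋂ (_ : (setOrb G (Vb G σ) x ∩ B).Nonempty), setSmul G (Vc G (prng σ)) B) ∩
        (⋂ B ∈ Ba, ⋂ (_ : setOrb G (Vb G σ) x ∩ B = ∅), (setSmul G (Vc G (prng σ)) B)ᶜ)) ∧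
    (Bset G A α σ x =
      (⋂ B ∈ Blt, ⋂ (_ : (setOrb G (Vb G σ) x ∩ B).Nonempty), setSmul G (Vc G (prng σ)) B) ∩
        (⋂ B ∈ Blt, ⋂ (_ : setOrb G (Vb G σ) x ∩ B = ∅), (setSmul G (Vc G (prng σ)) B)ᶜ)) := by
  have hFam : Blt = Fam G A α := by rw [hBlt]; rfl
  have hBaF : Ba = BaF G A α := by rw [hBa]; rfl
  have hmain : ∀ γ, 1 ≤ γ → γ ≤ α → MainP G A γ := fun γ h1 _ => mainAll G A hbasis γ h1
  constructor
  · rw [hBaF, inter_form]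
    rw [mainAll G A hbasis (α + 1) (one_le_succ' α) σ hσ x]
    ext y
    rw [mem_Pcl, mem_setOf_eq]
    exact reduce_toBa G A hbasis hbasisInv α hα hmain σ x y
  · rw [hFam, inter_form]
    rw [mainAll G A hbasis α hα σ hσ x]
    rfl
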